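/- Let Θ = (θ₋, θ₊) and Φ = (φ₋, φ₊) be open intervals, let W : Θ → ℝ be differentiable, and let g : Θ → Φ be an invertible differentiable function with nonvanishing derivative whose inverse g⁻¹ is differentiable. Let η > 0 and c > 0, define Ŵ = W ∘ g⁻¹ on Φ, and define the densities π(θ) = η exp(−η W(θ)) |W'(θ)| / (1 − exp(−η c)) on Θ and π̂(φ) = η exp(−η Ŵ(φ)) |Ŵ'(φ)| / (1 − exp(−η c)) on Φ. Then for every θ ∈ Θ, π(θ) = π̂(g(θ)) · |g'(θ)|; that is, the WCP prior is invariant under reparameterization: the prior for φ = g(θ) is obtained from the prior for θ by the change-of-variables formula. -/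

import Mathlib

open Set

/-- Invariance of the univariate WCP prior under reparameterization: for a differentiable
distance function `W` on `Θ = (θm, θp)` and an invertible differentiable reparameterization
`g : Θ → Φ = (φm, φp)` with nonvanishing derivative and differentiable inverse `ginv`,
setting `Ŵ = W ∘ ginv`, the densities
`π(θ) = η exp(−η W(θ)) |W'(θ)| / (1 − exp(−η c))` and
`π̂(φ) = η exp(−η Ŵ(φ)) |Ŵ'(φ)| / (1 − exp(−η c))` satisfy
`π(θ) = π̂(g(θ)) ⬝ |g'(θ)|` for every `θ ∈ Θ`. -/
theorem stmt_6 (θm θp φm φp : ℝ) (W g ginv : ℝ → ℝ) (η c : ℝ)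
    (hη : 0 < η) (hc : 0 < c)
    (hW : ∀ θ ∈ Ioo θm θp, DifferentiableAt ℝ W θ)
    (hgmap : MapsTo g (Ioo θm θp) (Ioo φm φp))
    (hgdiff : ∀ θ ∈ Ioo θm θp, DifferentiableAt ℝ g θ)
    (hg' : ∀ θ ∈ Ioo θm θp, deriv g θ ≠ 0)
    (hginvmap : MapsTo ginv (Ioo φm φp) (Ioo θm θp))
    (hleft : ∀ θ ∈ Ioo θm θp, ginv (g θ) = θ)
    (hright : ∀ φ ∈ Ioo φm φp, g (ginv φ) = φ)
    (hginvdiff : ∀ φ ∈ Ioo φm φp, DifferentiableAt ℝ ginv φ) :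
    ∀ θ ∈ Ioo θm θp,
      η * Real.exp (-η * W θ) * |deriv W θ| / (1 - Real.exp (-η * c)) =
      (η * Real.exp (-η * (W ∘ ginv) (g θ)) * |deriv (W ∘ ginv) (g θ)| /
        (1 - Real.exp (-η * c))) * |deriv g θ| := by
  intro θ hθ
  have hgθ : g θ ∈ Ioo φm φp := hgmap hθ
  have hWθ : DifferentiableAt ℝ W (ginv (g θ)) := by rw [hleft θ hθ]; exact hW θ hθ
  -- deriv of composition W ∘ ginv at g θ
  have hcomp : deriv (W ∘ ginv) (g θ) = deriv W θ * deriv ginv (g θ) := by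
    rw [deriv_comp (x := g θ) hWθ (hginvdiff _ hgθ), hleft θ hθ]
  -- ginv ∘ g = id near θ
  have hev : (ginv ∘ g) =ᶠ[nhds θ] id := by
    filter_upwards [isOpen_Ioo.mem_nhds hθ] with x hx using hleft x hx
  have hone : deriv ginv (g θ) * deriv g θ = 1 := by
    have h1 : deriv (ginv ∘ g) θ = deriv ginv (g θ) * deriv g θ :=
      deriv_comp _ (hginvdiff _ hgθ) (hgdiff θ hθ)
    rw [← h1, hev.deriv_eq, deriv_id]
  have habs : |deriv ginv (g θ)| * |deriv g θ| = 1 := by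
    rw [← abs_mul, hone, abs_one]
  have hval : (W ∘ ginv) (g θ) = W θ := by simp [Function.comp, hleft θ hθ]
  rw [hval, hcomp, abs_mul]
  ring_nf
  rw [mul_assoc _ |deriv ginv (g θ)|, habs, mul_one]
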